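/- Let F = (F_1, …, F_r) be a cuspidal vector-valued modular form of real weight k with respect to a representation ρ : SL(2,ℤ) → GL(r,ℂ), such that all Fourier coefficients a_i(n) of every component F_i are non-negative real numbers. Then F = 0, i.e. each component function F_i vanishes identically on ℍ. -/

import Mathlib

/- STATEMENT 2: A cuspidal vector-valued modular form of real weight k for a
representation `ρ : SL(2,ℤ) → GL(r,ℂ)` all of whose Fourier coefficients are
non-negative real numbers vanishes identically.  Cuspidality is encoded by an
expansion `F_i(τ) = Σ_{n≥0} a_i(n) e^{2πinτ/N_i}` with constant term `a_i(0) = 0`,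
i.e. the expansion runs over `n ≥ 1`. -/

open UpperHalfPlane Complex Matrix
open scoped Manifold Real

noncomputable def myPt (t : ℝ) : ℍ :=
  if h : 0 < t then ⟨Complex.I * t, by simpa using h⟩ else ⟨Complex.I, by simp⟩

lemma myPt_coe {t : ℝ} (ht : 0 < t) : (myPt t : ℂ) = Complex.I * t := by
  simp [myPt, ht]

lemma myPt_S {t : ℝ} (ht : 0 < t) : ModularGroup.S • myPt t = myPt (1/t) := by
  rw [modular_S_smul]
  apply UpperHalfPlane.ext
  show (-(myPt t : ℂ))⁻¹ = (myPt (1/t) : ℂ)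
  rw [myPt_coe ht, myPt_coe (by positivity)]
  have h1 : (t : ℂ) ≠ 0 := by exact_mod_cast ne_of_gt ht
  field_simp
  rw [Complex.I_sq, Complex.ofReal_div, Complex.ofReal_one, mul_assoc, mul_one_div_cancel h1]
  ring

theorem cuspidal_vvmf_nonneg_coeffs_vanishes
    (r : ℕ) (hr : 0 < r) (k : ℝ)
    (ρ : Matrix.SpecialLinearGroup (Fin 2) ℤ →* Matrix.GeneralLinearGroup (Fin r) ℂ)
    (F : Fin r → ℍ → ℂ) (N : Fin r → ℕ+) (a : Fin r → ℕ → ℝ)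
    (hnonneg : ∀ i n, 0 ≤ a i n)
    (hcusp : ∀ i, a i 0 = 0)
    (hhol : ∀ i, MDifferentiable 𝓘(ℂ) 𝓘(ℂ) (F i))
    (hexp : ∀ (i : Fin r) (τ : ℍ),
      HasSum (fun n : ℕ =>
        (a i n : ℂ) * Complex.exp (2 * π * Complex.I * (n : ℂ) * (τ : ℂ) / (N i : ℂ))) (F i τ))
    (htrans : ∀ (γ : Matrix.SpecialLinearGroup (Fin 2) ℤ) (τ : ℍ) (i : Fin r),
      (((γ : Matrix (Fin 2) (Fin 2) ℤ) 1 0 : ℂ) * (τ : ℂ)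
          + ((γ : Matrix (Fin 2) (Fin 2) ℤ) 1 1 : ℂ)) ^ (-(k : ℂ)) * F i (γ • τ)
        = ∑ j : Fin r, ((ρ γ : Matrix (Fin r) (Fin r) ℂ) i j) * F j τ) :
    ∀ (i : Fin r) (τ : ℍ), F i τ = 0 := by
  -- Step 1: real Fourier expansion on the imaginary axis
  have key : ∀ (i : Fin r) (t : ℝ), 0 < t →
      HasSum (fun n : ℕ => a i n * Real.exp (-(2*π*n*t/(N i : ℕ)))) ((F i (myPt t)).re)
      ∧ (F i (myPt t)).im = 0 := by
    intro i t ht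
    have h := hexp i (myPt t)
    have hN : ((N i : ℕ) : ℂ) ≠ 0 := by exact_mod_cast (N i).ne_zero
    have hterm : (fun n : ℕ => (a i n : ℂ) * Complex.exp (2*π*Complex.I*(n:ℂ)*((myPt t : ℂ))/(N i : ℂ)))
        = fun n : ℕ => ((a i n * Real.exp (-(2*π*n*t/(N i : ℕ))) : ℝ) : ℂ) := by
      funext n
      rw [myPt_coe ht]
      have harg : (2*π*Complex.I*(n:ℂ)*(Complex.I*(t:ℂ))/((N i : ℕ) : ℂ)) = ((-(2*π*n*t/(N i : ℕ)) : ℝ) : ℂ) := by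
        push_cast
        linear_combination (2*(π:ℂ)*(n:ℂ)*(t:ℂ)/((N i : ℕ):ℂ)) * Complex.I_mul_I
      rw [show ((N i : ℂ)) = (((N i : ℕ) : ℕ) : ℂ) by norm_cast] at *
      rw [harg, ← Complex.ofReal_exp]
      push_cast
      ring
    rw [hterm] at h
    constructor
    · have := h.mapL Complex.reCLM
      simpa only [Complex.reCLM_apply, Complex.ofReal_re] using this
    · have h2 := h.mapL Complex.imCLM
      simp only [Complex.imCLM_apply, Complex.ofReal_im] at h2
      exact (hasSum_zero.unique h2).symm
  -- nonnegativity of values on imaginary axis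
  have hre0 : ∀ (i : Fin r) (t : ℝ), 0 < t → 0 ≤ (F i (myPt t)).re := by
    intro i t ht
    exact (key i t ht).1.nonneg (fun n => mul_nonneg (hnonneg i n) (Real.exp_nonneg _))
  -- each term bounded by value
  have hterm_le : ∀ (i : Fin r) (n : ℕ) (t : ℝ), 0 < t →
      a i n * Real.exp (-(2*π*n*t/(N i : ℕ))) ≤ (F i (myPt t)).re := by
    intro i n t ht
    exact le_hasSum (key i t ht).1 n (fun m _ => mul_nonneg (hnonneg i m) (Real.exp_nonneg _))
  -- exponential decay
  have hdecay : ∀ (i : Fin r) (t : ℝ), 1 ≤ t →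
      (F i (myPt t)).re ≤ Real.exp (-(2*π*(t-1)/(N i : ℕ))) * (F i (myPt 1)).re := by
    intro i t ht
    have h1 := (key i 1 one_pos).1
    have h2 := (key i t (lt_of_lt_of_le one_pos ht)).1
    refine hasSum_le (fun n => ?_) h2 (h1.mul_left _)
    rcases Nat.eq_zero_or_pos n with hn | hn
    · subst hn
      simp only [hcusp i, zero_mul, mul_zero]
      positivity
    · have hNpos : (0:ℝ) < (N i : ℕ) := by exact_mod_cast (N i).pos
      have hn1 : (1:ℝ) ≤ n := by exact_mod_cast hn
      rw [show Real.exp (-(2*π*(t-1)/(N i:ℕ))) * (a i n * Real.exp (-(2*π*n*1/(N i:ℕ))))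
            = a i n * Real.exp (-(2*π*(t-1)/(N i:ℕ)) + -(2*π*n*1/(N i:ℕ))) by
          rw [Real.exp_add]; ring]
      gcongr a i n * ?_
      · exact hnonneg i n
      rw [Real.exp_le_exp]
      have hineq : (2*π*(t-1) + 2*π*n*1) / ((N i : ℕ):ℝ) ≤ 2*π*n*t/((N i : ℕ):ℝ) := by
        rw [div_le_div_iff_of_pos_right hNpos]
        nlinarith [Real.pi_pos, mul_nonneg (mul_nonneg (le_of_lt Real.pi_pos)
          (sub_nonneg.mpr ht)) (sub_nonneg.mpr hn1)]
      rw [add_div] at hineq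
      linarith
  -- transformation under S
  have hS10 : ((ModularGroup.S : Matrix (Fin 2) (Fin 2) ℤ) 1 0 : ℂ) = 1 := by
    simp [ModularGroup.S]
  have hS11 : ((ModularGroup.S : Matrix (Fin 2) (Fin 2) ℤ) 1 1 : ℂ) = 0 := by
    simp [ModularGroup.S]
  have hFS : ∀ (i : Fin r) (t : ℝ), 0 < t →
      F i (myPt (1/t)) = (Complex.I*t) ^ (k:ℂ)
        * ∑ j : Fin r, ((ρ ModularGroup.S : Matrix (Fin r) (Fin r) ℂ) i j) * F j (myPt t) := by
    intro i t ht
    have h := htrans ModularGroup.S (myPt t) i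
    rw [hS10, hS11, myPt_S ht, myPt_coe ht, one_mul, add_zero, Complex.cpow_neg] at h
    have hz0 : (Complex.I * (t:ℂ)) ≠ 0 := by
      simp [Complex.I_ne_zero, Complex.ext_iff, ne_of_gt ht]
    have hz : (Complex.I * (t:ℂ)) ^ (k:ℂ) ≠ 0 := by
      rw [Complex.cpow_def_of_ne_zero hz0]
      exact Complex.exp_ne_zero _
    field_simp at h
    rw [h, mul_comm]
  -- abs equals re on the imaginary axis
  have habs : ∀ (j : Fin r) (t : ℝ), 0 < t → ‖F j (myPt t)‖ = (F j (myPt t)).re := by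
    intro j t ht
    have : F j (myPt t) = (((F j (myPt t)).re : ℝ) : ℂ) :=
      Complex.ext rfl (by simp [(key j t ht).2])
    rw [this, Complex.norm_real, Real.norm_eq_abs, _root_.abs_of_nonneg (hre0 j t ht), Complex.ofReal_re]
  -- upper bound for F_i near the real axis
  have hub : ∀ (i : Fin r) (t : ℝ), 1 ≤ t →
      (F i (myPt (1/t))).re ≤ t ^ k * ∑ j : Fin r,
        ‖(ρ ModularGroup.S : Matrix (Fin r) (Fin r) ℂ) i j‖
          * ((F j (myPt 1)).re * Real.exp (-(2*π*(t-1)/(N j : ℕ)))) := by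
    intro i t ht
    have ht0 : (0:ℝ) < t := lt_of_lt_of_le one_pos ht
    have hz0 : (Complex.I * (t:ℂ)) ≠ 0 := by
      simp [Complex.I_ne_zero, Complex.ext_iff, ne_of_gt ht0]
    have h1 : ‖(Complex.I*(t:ℂ)) ^ (k:ℂ)‖ = t ^ k := by
      rw [norm_cpow_of_ne_zero hz0]
      simp [_root_.abs_of_pos ht0]
    calc (F i (myPt (1/t))).re
        ≤ ‖F i (myPt (1/t))‖ := Complex.re_le_norm _
      _ ≤ t ^ k * ∑ j : Fin r,
            ‖(ρ ModularGroup.S : Matrix (Fin r) (Fin r) ℂ) i j‖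
              * ((F j (myPt 1)).re * Real.exp (-(2*π*(t-1)/(N j : ℕ)))) := by
          rw [hFS i t ht0, norm_mul, h1]
          gcongr t ^ k * ?_
          refine (norm_sum_le _ _).trans ?_
          refine Finset.sum_le_sum fun j _ => ?_
          rw [norm_mul, habs j t ht0]
          gcongr
          calc (F j (myPt t)).re
              ≤ Real.exp (-(2*π*(t-1)/(N j : ℕ))) * (F j (myPt 1)).re := hdecay j t ht
            _ = (F j (myPt 1)).re * Real.exp (-(2*π*(t-1)/(N j : ℕ))) := mul_comm _ _
  -- the upper bound tends to zero
  have hB : ∀ i : Fin r, Filter.Tendsto (fun t : ℝ => t ^ k * ∑ j : Fin r,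
      ‖(ρ ModularGroup.S : Matrix (Fin r) (Fin r) ℂ) i j‖
        * ((F j (myPt 1)).re * Real.exp (-(2*π*(t-1)/(N j : ℕ))))) Filter.atTop (nhds (0:ℝ)) := by
    intro i
    have hrw : (fun t : ℝ => t ^ k * ∑ j : Fin r,
        ‖(ρ ModularGroup.S : Matrix (Fin r) (Fin r) ℂ) i j‖
          * ((F j (myPt 1)).re * Real.exp (-(2*π*(t-1)/(N j : ℕ)))))
        = fun t : ℝ => ∑ j : Fin r, t ^ k *
            (‖(ρ ModularGroup.S : Matrix (Fin r) (Fin r) ℂ) i j‖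
              * ((F j (myPt 1)).re * Real.exp (-(2*π*(t-1)/(N j : ℕ))))) := by
      funext t; rw [Finset.mul_sum]
    rw [hrw, show (0:ℝ) = ∑ _j : Fin r, (0:ℝ) by simp]
    apply tendsto_finset_sum
    intro j _
    have hNpos : (0:ℝ) < (N j : ℕ) := by exact_mod_cast (N j).pos
    set c := ‖(ρ ModularGroup.S : Matrix (Fin r) (Fin r) ℂ) i j‖
      * (F j (myPt 1)).re with hc
    have heq : ∀ t : ℝ, t ^ k *
        (‖(ρ ModularGroup.S : Matrix (Fin r) (Fin r) ℂ) i j‖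
          * ((F j (myPt 1)).re * Real.exp (-(2*π*(t-1)/(N j : ℕ)))))
        = (t ^ k * Real.exp (-(2*π/(N j : ℕ)) * t)) * (c * Real.exp (2*π/(N j : ℕ))) := by
      intro t
      have : Real.exp (-(2*π*(t-1)/(N j : ℕ)))
          = Real.exp (-(2*π/(N j : ℕ)) * t) * Real.exp (2*π/(N j : ℕ)) := by
        rw [← Real.exp_add]; congr 1; field_simp; ring
      rw [this, hc]; ring
    rw [funext heq]
    have := (tendsto_rpow_mul_exp_neg_mul_atTop_nhds_zero k (2*π/(N j : ℕ))
      (by positivity)).mul_const (c * Real.exp (2*π/(N j : ℕ)))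
    simpa using this
  -- F_i (i s) → 0 as s → 0⁺
  have hto0 : ∀ i : Fin r, Filter.Tendsto (fun t : ℝ => (F i (myPt (1/t))).re)
      Filter.atTop (nhds (0:ℝ)) := by
    intro i
    apply tendsto_of_tendsto_of_tendsto_of_le_of_le' tendsto_const_nhds (hB i)
    · filter_upwards [Filter.eventually_ge_atTop 1] with t ht
      exact hre0 i (1/t) (one_div_pos.mpr (lt_of_lt_of_le one_pos ht))
    · filter_upwards [Filter.eventually_ge_atTop 1] with t ht
      exact hub i t ht
  -- all coefficients vanish
  have hzero : ∀ (i : Fin r) (n : ℕ), a i n = 0 := by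
    intro i n
    have hc : Continuous fun s : ℝ => a i n * Real.exp (-(2*π*n*s/(N i : ℕ))) := by
      fun_prop
    have h0 : Filter.Tendsto (fun t : ℝ => 1/t) Filter.atTop (nhds (0:ℝ)) := by
      simpa [one_div] using tendsto_inv_atTop_zero
    have hlim : Filter.Tendsto (fun t : ℝ => a i n * Real.exp (-(2*π*n*(1/t)/(N i : ℕ))))
        Filter.atTop (nhds (a i n)) := by
      have := (hc.tendsto 0).comp h0
      simpa [Function.comp_def] using this
    have hle : a i n ≤ 0 := by
      refine le_of_tendsto_of_tendsto hlim (hto0 i) ?_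
      filter_upwards [Filter.eventually_ge_atTop 1] with t ht
      exact hterm_le i n (1/t) (one_div_pos.mpr (lt_of_lt_of_le one_pos ht))
    linarith [hnonneg i n]
  -- conclude
  intro i τ
  have h := hexp i τ
  simp only [hzero, Complex.ofReal_zero, zero_mul] at h
  exact (hasSum_zero.unique h).symm
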